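/- Define the operation Der on pairs of formal power series over ℚ by Der(d, h) = (h', t·d). Let Pas = ((1−t)^{−1}, t·(1−t)^{−1}) be the pair defining the Pascal Riordan array. Then for every i ≥ 0, the 2i-fold iterate satisfies Der^{2i}(Pas) = (P_i(t), t·P_i(t)) and the (2i+1)-fold iterate satisfies Der^{2i+1}(Pas) = (P_{i+1}(t), t·P_i(t)), where P_i(t) = ∑_{k≥0} (k+1)^i·t^k. (Equivalently, Der^{2i}(Pas) = 𝓡(A_i(t)/(1−t)^{i+1}, t·A_i(t)/(1−t)^{i+1}) with A_i the i-th Eulerian polynomial.) -/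

import Mathlib

open PowerSeries

/-- The operation `Der` on pairs of formal power series:
`Der(d, h) = (h', t·d)`. -/
noncomputable def riordanDer (p : ℚ⟦X⟧ × ℚ⟦X⟧) : ℚ⟦X⟧ × ℚ⟦X⟧ :=
  (p.2.derivativeFun, X * p.1)

/-- `P i = ∑_{k≥0} (k+1)^i t^k`, the power series of `i`-th powers of the
positive integers (equal to `A_i(t)/(1−t)^{i+1}` with `A_i` the Eulerian polynomial). -/
noncomputable def powSeries (i : ℕ) : ℚ⟦X⟧ :=
  PowerSeries.mk fun k => ((k + 1 : ℕ) : ℚ) ^ i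

lemma inv_one_sub_X : (1 - X : ℚ⟦X⟧)⁻¹ = powSeries 0 := by
  rw [PowerSeries.inv_eq_iff_mul_eq_one]
  · ext n
    cases n with
    | zero => simp [powSeries]
    | succ n =>
      rw [mul_sub, mul_one]
      simp [powSeries, PowerSeries.coeff_succ_mul_X, PowerSeries.coeff_one]
  · simp

lemma der_X_mul_pow (i : ℕ) :
    (X * powSeries i).derivativeFun = powSeries (i + 1) := by
  ext n
  show coeff n (derivative ℚ (X * powSeries i)) = _
  rw [PowerSeries.coeff_derivativeFun, PowerSeries.coeff_succ_X_mul]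
  simp [powSeries, pow_succ]

/-- iterated derivatives of the Pascal array
`Pas = 𝓡(1/(1−t), t/(1−t))`: for all `i ≥ 0`,
`Der^{2i}(Pas) = 𝓡(P_i, t·P_i)` and `Der^{2i+1}(Pas) = 𝓡(P_{i+1}, t·P_i)`. -/
theorem der_iterate_pascal (i : ℕ) :
    riordanDer^[2 * i] ((1 - X : ℚ⟦X⟧)⁻¹, X * (1 - X : ℚ⟦X⟧)⁻¹) =
      (powSeries i, X * powSeries i) ∧
    riordanDer^[2 * i + 1] ((1 - X : ℚ⟦X⟧)⁻¹, X * (1 - X : ℚ⟦X⟧)⁻¹) =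
      (powSeries (i + 1), X * powSeries i) := by
  induction i with
  | zero =>
    constructor
    · simp [inv_one_sub_X]
    · simp only [Nat.mul_zero, Nat.zero_add, Function.iterate_one, inv_one_sub_X,
        riordanDer, der_X_mul_pow]
  | succ n ih =>
    have h2 : 2 * (n + 1) = (2 * n + 1) + 1 := by ring
    have heven : riordanDer^[2 * (n + 1)]
        ((1 - X : ℚ⟦X⟧)⁻¹, X * (1 - X : ℚ⟦X⟧)⁻¹) =
        (powSeries (n + 1), X * powSeries (n + 1)) := by
      rw [h2, Function.iterate_succ_apply', ih.2, riordanDer, der_X_mul_pow]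
    refine ⟨heven, ?_⟩
    rw [Function.iterate_succ_apply', heven, riordanDer, der_X_mul_pow]
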